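/- Fix a dimension d and parameters λ > 0 and α ∈ [0,1). The elastic net cost with parameters λ and α is c(x,y) = λ(1−α)‖x−y‖₂² + λα‖x−y‖₁. Let φ : ℝ^d → ℝ be (Fréchet) differentiable at x ∈ ℝ^d with gradient ∇φ(x), let y ∈ ℝ^d, and suppose x maximizes x' ↦ φ(x') − c(x', y), i.e., φ(x') − c(x', y) ≤ φ(x) − c(x, y) for all x' ∈ ℝ^d. Then for every coordinate i ∈ {1,…,d}, xᵢ − yᵢ = ST_{α/(2(1−α))}( ∇φ(x)ᵢ / (2λ(1−α)) ), where ST_γ is the soft-thresholding operator with threshold γ ≥ 0 defined by ST_γ(z) = z+γ if z ≤ −γ, ST_γ(z) = 0 if −γ < z < γ, and ST_γ(z) = z−γ if z ≥ γ. Equivalently, x − y equals the coordinatewise soft-thresholding ST_{α/(2(1−α))}( ∇φ(x) / (2λ(1−α)) ). -/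

import Mathlib

open scoped BigOperators
open Filter Topology Set

/-- The soft-thresholding operator with threshold `γ`. -/
noncomputable def softThreshold (γ z : ℝ) : ℝ :=
  if z ≤ -γ then z + γ else if z < γ then 0 else z - γ

/-- One-dimensional first-order optimality analysis. -/
lemma key_1d (a b u g : ℝ) (ha : 0 < a) (hb : 0 ≤ b)
    (F : ℝ → ℝ) (hF : HasDerivAt F g 0)
    (hineq : ∀ t : ℝ, F t - F 0 ≤ a * u * t + (a / 2) * t ^ 2 + b * (|u + t| - |u|)) :
    u = softThreshold (b / a) (g / a) := by
  have hslope : Tendsto (slope F 0) (𝓝[≠] (0:ℝ)) (𝓝 g) :=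
    hasDerivAt_iff_tendsto_slope.mp hF
  have hslope_pos : Tendsto (slope F 0) (𝓝[>] (0:ℝ)) (𝓝 g) :=
    hslope.mono_left (nhdsWithin_mono _ (fun t ht => ne_of_gt ht))
  have hslope_neg : Tendsto (slope F 0) (𝓝[<] (0:ℝ)) (𝓝 g) :=
    hslope.mono_left (nhdsWithin_mono _ (fun t ht => ne_of_lt ht))
  have hsl : ∀ t : ℝ, slope F 0 t = (F t - F 0) / t := by
    intro t; rw [slope_def_field]; ring_nf
  -- linear comparison functions tendsto
  have hlin : ∀ C : ℝ, Tendsto (fun t : ℝ => C + (a/2) * t) (𝓝 (0:ℝ)) (𝓝 C) := by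
    intro C
    have : Tendsto (fun t : ℝ => C + (a/2) * t) (𝓝 (0:ℝ)) (𝓝 (C + (a/2) * 0)) :=
      tendsto_const_nhds.add (tendsto_id.const_mul _)
    simpa using this
  have hlinP : ∀ C : ℝ, Tendsto (fun t : ℝ => C + (a/2) * t) (𝓝[>] (0:ℝ)) (𝓝 C) :=
    fun C => (hlin C).mono_left nhdsWithin_le_nhds
  have hlinN : ∀ C : ℝ, Tendsto (fun t : ℝ => C + (a/2) * t) (𝓝[<] (0:ℝ)) (𝓝 C) :=
    fun C => (hlin C).mono_left nhdsWithin_le_nhds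
  have hba : 0 ≤ b / a := div_nonneg hb ha.le
  rcases lt_trichotomy u 0 with hu | hu | hu
  · -- u < 0 : g = a*u - b
    have hub : ∀ t : ℝ, |t| < -u → F t - F 0 ≤ (a*u - b) * t + (a/2) * t^2 := by
      intro t ht
      have h1 : |u + t| = -(u + t) := by
        rw [abs_of_nonpos]; cases abs_lt.mp ht; linarith
      have h2 : |u| = -u := abs_of_neg hu
      have := hineq t; rw [h1, h2] at this; nlinarith
    have hge : g ≤ a*u - b := by
      refine le_of_tendsto_of_tendsto hslope_pos (hlinP (a*u - b)) ?_
      filter_upwards [Ioo_mem_nhdsGT_of_mem (show (0:ℝ) ∈ Ico 0 (-u) by constructor <;> [rfl; linarith])] with t ht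
      obtain ⟨ht0, htu⟩ := ht
      have h := hub t (by rw [abs_of_pos ht0]; exact htu)
      rw [hsl]
      rw [div_le_iff₀ ht0]
      nlinarith
    have hle : a*u - b ≤ g := by
      refine le_of_tendsto_of_tendsto (hlinN (a*u - b)) hslope_neg ?_
      filter_upwards [Ioo_mem_nhdsLT_of_mem (show (0:ℝ) ∈ Ioc u 0 by constructor <;> [linarith; rfl])] with t ht
      obtain ⟨htu, ht0⟩ := ht
      have h := hub t (by rw [abs_of_neg ht0]; linarith)
      rw [hsl]
      rw [le_div_iff_of_neg ht0]
      nlinarith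
    have hg : g = a*u - b := le_antisymm hge hle
    have hz : g / a = u - b / a := by rw [hg]; field_simp
    rw [softThreshold, if_pos (by rw [hz]; linarith)]
    rw [hz]; ring
  · -- u = 0 : |g| ≤ b
    subst hu
    have hub : ∀ t : ℝ, F t - F 0 ≤ (a/2) * t^2 + b * |t| := by
      intro t; have := hineq t; simpa using this
    have hge : g ≤ b := by
      refine le_of_tendsto_of_tendsto hslope_pos (hlinP b) ?_
      filter_upwards [self_mem_nhdsWithin] with t ht0
      rw [Set.mem_Ioi] at ht0
      have h := hub t
      rw [abs_of_pos ht0] at h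
      rw [hsl, div_le_iff₀ ht0]; nlinarith
    have hle : -b ≤ g := by
      refine le_of_tendsto_of_tendsto (hlinN (-b)) hslope_neg ?_
      filter_upwards [self_mem_nhdsWithin] with t ht0
      rw [Set.mem_Iio] at ht0
      have h := hub t
      rw [abs_of_neg ht0] at h
      rw [hsl, le_div_iff_of_neg ht0]; nlinarith
    rw [softThreshold]
    split_ifs with h1 h2
    · have h3 : -b/a ≤ g/a := (div_le_div_iff_of_pos_right ha).mpr hle
      rw [neg_div] at h3
      linarith
    · ring
    · have h3 : g/a ≤ b/a := (div_le_div_iff_of_pos_right ha).mpr hge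
      push_neg at h1 h2
      linarith
  · -- u > 0 : g = a*u + b
    have hub : ∀ t : ℝ, |t| < u → F t - F 0 ≤ (a*u + b) * t + (a/2) * t^2 := by
      intro t ht
      have h1 : |u + t| = u + t := by
        rw [abs_of_pos]; cases abs_lt.mp ht; linarith
      have h2 : |u| = u := abs_of_pos hu
      have := hineq t; rw [h1, h2] at this; nlinarith
    have hge : g ≤ a*u + b := by
      refine le_of_tendsto_of_tendsto hslope_pos (hlinP (a*u + b)) ?_
      filter_upwards [Ioo_mem_nhdsGT_of_mem (show (0:ℝ) ∈ Ico 0 u by constructor <;> [rfl; linarith])] with t ht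
      obtain ⟨ht0, htu⟩ := ht
      have h := hub t (by rw [abs_of_pos ht0]; exact htu)
      rw [hsl, div_le_iff₀ ht0]; nlinarith
    have hle : a*u + b ≤ g := by
      refine le_of_tendsto_of_tendsto (hlinN (a*u + b)) hslope_neg ?_
      filter_upwards [Ioo_mem_nhdsLT_of_mem (show (0:ℝ) ∈ Ioc (-u) 0 by constructor <;> [linarith; rfl])] with t ht
      obtain ⟨htu, ht0⟩ := ht
      have h := hub t (by rw [abs_of_neg ht0]; linarith)
      rw [hsl, le_div_iff_of_neg ht0]; nlinarith
    have hg : g = a*u + b := le_antisymm hge hle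
    have hz : g / a = u + b / a := by rw [hg]; field_simp
    rw [softThreshold, if_neg (by rw [hz]; push_neg; linarith), if_neg (by rw [hz]; push_neg; linarith)]
    rw [hz]; ring

/-- pointwise Brenier-type theorem for the elastic net cost:
if `φ` is differentiable at `x` with gradient `∇φ(x)` and `x` maximizes
`x' ↦ φ(x') − c(x', y)` where `c(x,y) = λ(1−α)‖x−y‖₂² + λα‖x−y‖₁`, then
`xᵢ − yᵢ = ST_{α/(2(1−α))}( ∇φ(x)ᵢ / (2λ(1−α)) )` for every coordinate `i`. -/
theorem enot_brenier_pointwise {d : ℕ} (lam α : ℝ) (hlam : 0 < lam)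
    (hα : α ∈ Set.Ico (0 : ℝ) 1)
    (φ : EuclideanSpace ℝ (Fin d) → ℝ)
    (x y gradφ : EuclideanSpace ℝ (Fin d))
    (hgrad : HasGradientAt φ gradφ x)
    (hmax : ∀ x' : EuclideanSpace ℝ (Fin d),
      φ x' - (lam * (1 - α) * ‖x' - y‖ ^ 2 + lam * α * ∑ i, |x' i - y i|) ≤
        φ x - (lam * (1 - α) * ‖x - y‖ ^ 2 + lam * α * ∑ i, |x i - y i|)) :
    ∀ i : Fin d,
      x i - y i = softThreshold (α / (2 * (1 - α))) (gradφ i / (2 * lam * (1 - α))) := by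
  obtain ⟨hα0, hα1⟩ := hα
  have h1α : (0:ℝ) < 1 - α := by linarith
  intro i
  set E : EuclideanSpace ℝ (Fin d) := EuclideanSpace.single i (1:ℝ) with hE
  set a : ℝ := 2 * lam * (1 - α) with ha_def
  set b : ℝ := lam * α with hb_def
  have ha : 0 < a := by positivity
  have hb : 0 ≤ b := by positivity
  set u : ℝ := x i - y i with hu_def
  set F : ℝ → ℝ := fun t => φ (x + t • E) with hF_def
  -- derivative of F at 0
  have hcurve : HasDerivAt (fun t : ℝ => x + t • E) E 0 := by
    simpa using ((hasDerivAt_id (0:ℝ)).smul_const E).const_add x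
  have hFd : HasDerivAt F (gradφ i) 0 := by
    have h0 : x + (0:ℝ) • E = x := by simp
    have hφ : HasFDerivAt φ (InnerProductSpace.toDual ℝ _ gradφ) (x + (0:ℝ) • E) := by
      rw [h0]; exact hgrad
    have := hφ.comp_hasDerivAt (0:ℝ) hcurve
    have hval : (InnerProductSpace.toDual ℝ (EuclideanSpace ℝ (Fin d)) gradφ) E = gradφ i := by
      simp [InnerProductSpace.toDual_apply_apply, hE, EuclideanSpace.inner_single_right]
    rwa [hval] at this
  -- pointwise inequality
  have hineq : ∀ t : ℝ, F t - F 0 ≤ a * u * t + (a / 2) * t ^ 2 + b * (|u + t| - |u|) := by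
    intro t
    have hm := hmax (x + t • E)
    have hnorm : ‖x + t • E - y‖ ^ 2 = ‖x - y‖ ^ 2 + 2 * t * u + t ^ 2 := by
      have hrw : x + t • E - y = (x - y) + t • E := by abel
      rw [hrw, @norm_add_sq_real]
      have hin : inner ℝ (x - y) (t • E) = t * u := by
        rw [real_inner_smul_right, hE, EuclideanSpace.inner_single_right]
        simp [hu_def]
      rw [hin, norm_smul, hE, EuclideanSpace.norm_single]
      simp [mul_pow]
      ring
    have hsum : ∑ j, |(x + t • E) j - y j| = (∑ j, |x j - y j|) - |u| + |u + t| := by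
      have hterm : ∀ j : Fin d, (x + t • E) j = x j + (if j = i then t else 0) := by
        intro j
        simp [hE, EuclideanSpace.single_apply, PiLp.add_apply, PiLp.smul_apply, mul_ite]
      have h1 : ∑ j, (|(x + t • E) j - y j| - |x j - y j|) = |u + t| - |u| := by
        rw [Finset.sum_eq_single_of_mem i (Finset.mem_univ i)]
        · have hti : (x + t • E) i = x i + t := by rw [hterm i]; simp
          rw [hti, show x i + t - y i = u + t by rw [hu_def]; ring, hu_def]
        · intro j _ hj
          rw [hterm j]
          simp [hj]
      have h2 : (∑ j, |(x + t • E) j - y j|) - ∑ j, |x j - y j| = |u + t| - |u| := by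
        rw [← Finset.sum_sub_distrib]; exact h1
      linarith [h2]
    rw [hnorm, hsum] at hm
    have hF0 : F 0 = φ x := by simp [hF_def]
    simp only [hF_def, zero_smul, add_zero]
    rw [hb_def] at hm
    rw [ha_def, hb_def]
    have hr : 2 * lam * (1 - α) * u * t + 2 * lam * (1 - α) / 2 * t ^ 2 + lam * α * (|u + t| - |u|)
        = (lam * (1 - α) * (‖x - y‖ ^ 2 + 2 * t * u + t ^ 2)
            + lam * α * ((∑ j, |x j - y j|) - |u| + |u + t|))
          - (lam * (1 - α) * ‖x - y‖ ^ 2 + lam * α * ∑ j, |x j - y j|) := by ring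
    rw [hr]
    linarith [hm]
  have := key_1d a b u (gradφ i) ha hb F hFd hineq
  have hba : b / a = α / (2 * (1 - α)) := by
    rw [hb_def, ha_def]; field_simp
  rw [hba] at this
  exact this
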